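/- Let A ⊆ M, let μ ∈ 𝔐_x(M) be a global Keisler measure, and let ν₁, ν₂ ∈ 𝔐_y(M) be global Keisler measures with supp(ν₁) ∩ supp(ν₂) = ∅. If μ ▶_A ν₁ and μ ▶_A ν₂, then there exists a finite tuple b from M such that for all r, s ∈ [0,1] with r + s = 1, μ ▶_{A∪b} (rν₁ + sν₂). -/

import Mathlib

open FirstOrder

/-- A Keisler measure over the parameter set `A`, in the variables indexed by `α`:
a finitely additive probability measure on the Boolean algebra of `A`-definable
subsets of `M^α` (i.e. on `L_α(A)`).  The function `toFun` is defined on all sets,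
but only its values on `A`-definable sets are constrained (and relevant). -/
structure KeislerMeasure (L : FirstOrder.Language) (M : Type*) [L.Structure M]
    (A : Set M) (α : Type*) where
  toFun : Set (α → M) → ℝ
  measure_univ : toFun Set.univ = 1
  nonneg' : ∀ s : Set (α → M), A.Definable L s → 0 ≤ toFun s
  compl' : ∀ s : Set (α → M), A.Definable L s → toFun sᶜ = 1 - toFun s
  union_inter' : ∀ s t : Set (α → M), A.Definable L s → A.Definable L t →
    toFun (s ∪ t) = toFun s + toFun t - toFun (s ∩ t)

/-- Pull back a set of variable assignments along a variable reindexing map: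
for `S ⊆ M^α` and `f : α → β`, `cyl f S ⊆ M^β` is the corresponding cylinder.
E.g. `cyl Sum.inl X = X × M^β` inside `M^(α ⊕ β)`. -/
def cyl {M : Type*} {α β : Type*} (f : α → β) (S : Set (α → M)) : Set (β → M) :=
  {g : β → M | (fun a => g (f a)) ∈ S}

/-- The product `X × Y` of a set in variables `α` and a set in variables `β`,
viewed inside the variables `α ⊕ β`. -/
def prodSet {M : Type*} {α β : Type*} (X : Set (α → M)) (Y : Set (β → M)) :
    Set (α ⊕ β → M) :=
  cyl Sum.inl X ∩ cyl Sum.inr Y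

/-- The extension space `E(λ, μ)`: all global Keisler measures `ω` in the
variables `α ⊕ β` whose restriction to `A`-definable sets is `λ` and whose
marginal `π_α(ω)` is `μ`. -/
def extSpace (L : FirstOrder.Language) {M : Type*} [L.Structure M] (A : Set M)
    {α β : Type*} (lam : KeislerMeasure L M A (α ⊕ β))
    (mu : KeislerMeasure L M (Set.univ : Set M) α) :
    Set (KeislerMeasure L M (Set.univ : Set M) (α ⊕ β)) :=
  {om | (∀ s : Set (α ⊕ β → M), A.Definable L s → om.toFun s = lam.toFun s) ∧
    (∀ X : Set (α → M), (Set.univ : Set M).Definable L X →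
      om.toFun (cyl Sum.inl X) = mu.toFun X)}

/-- `μ` extension dominates `ν` over `A` (written `μ ≥_{E,A} ν`): there is
`λ ∈ 𝔐_{αβ}(A)` with `π_α(λ) = μ|_A` such that `π_β(ω) = ν` for every
`ω ∈ E(λ, μ)`. -/
def ExtDomOver (L : FirstOrder.Language) {M : Type*} [L.Structure M] (A : Set M)
    {α β : Type*} (mu : KeislerMeasure L M (Set.univ : Set M) α)
    (nu : KeislerMeasure L M (Set.univ : Set M) β) : Prop :=
  ∃ lam : KeislerMeasure L M A (α ⊕ β),
    (∀ X : Set (α → M), A.Definable L X →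
      lam.toFun (cyl Sum.inl X) = mu.toFun X) ∧
    ∀ om ∈ extSpace L A lam mu, ∀ Y : Set (β → M),
      (Set.univ : Set M).Definable L Y → om.toFun (cyl Sum.inr Y) = nu.toFun Y

/-- A complete type over `A` in the variables `α`: an ultrafilter on the
Boolean algebra of `A`-definable subsets of `M^α`. -/
structure CompleteType (L : FirstOrder.Language) (M : Type*) [L.Structure M]
    (A : Set M) (α : Type*) where
  sets : Set (Set (α → M))
  definable_of_mem : ∀ s ∈ sets, A.Definable L s
  univ_mem : Set.univ ∈ sets
  empty_not_mem : ∅ ∉ sets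
  inter_mem : ∀ s ∈ sets, ∀ t ∈ sets, s ∩ t ∈ sets
  superset_mem : ∀ s ∈ sets, ∀ t : Set (α → M), A.Definable L t → s ⊆ t → t ∈ sets
  mem_or_compl_mem : ∀ s : Set (α → M), A.Definable L s → s ∈ sets ∨ sᶜ ∈ sets

/-- `ω ∈ 𝔐_{αβ}(A)` is a separated amalgam: `ω(X × Y) = π_α(ω)(X) · π_β(ω)(Y)` for
all `A`-definable rectangles. -/
def SepAmalgam (L : FirstOrder.Language) {M : Type*} [L.Structure M] (A : Set M)
    {α β : Type*} (om : KeislerMeasure L M A (α ⊕ β)) : Prop :=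
  ∀ (X : Set (α → M)) (Y : Set (β → M)), A.Definable L X → A.Definable L Y →
    om.toFun (prodSet X Y) = om.toFun (cyl Sum.inl X) * om.toFun (cyl Sum.inr Y)

/-- The amalgam space `Amal(λ,μ)`: all separated amalgams in `E(λ,μ)`. -/
def amalSpace (L : FirstOrder.Language) {M : Type*} [L.Structure M] (A : Set M)
    {α β : Type*} (lam : KeislerMeasure L M A (α ⊕ β))
    (mu : KeislerMeasure L M (Set.univ : Set M) α) :
    Set (KeislerMeasure L M (Set.univ : Set M) (α ⊕ β)) :=
  {om ∈ extSpace L A lam mu | SepAmalgam L (Set.univ : Set M) om}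

/-- `μ` amalgam deciphers `ν` over `A` (`μ ▶_A ν`): there is `λ ∈ 𝔐_{αβ}(A)` with
`π_α(λ) = μ|_A`, `Amal(λ,μ) ≠ ∅`, and `π_β(ω) = ν` for every `ω ∈ Amal(λ,μ)`. -/
def AmalDecipherOver (L : FirstOrder.Language) {M : Type*} [L.Structure M] (A : Set M)
    {α β : Type*} (mu : KeislerMeasure L M (Set.univ : Set M) α)
    (nu : KeislerMeasure L M (Set.univ : Set M) β) : Prop :=
  ∃ lam : KeislerMeasure L M A (α ⊕ β),
    (∀ X : Set (α → M), A.Definable L X →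
      lam.toFun (cyl Sum.inl X) = mu.toFun X) ∧
    (amalSpace L A lam mu).Nonempty ∧
    ∀ om ∈ amalSpace L A lam mu, ∀ Y : Set (β → M),
      (Set.univ : Set M).Definable L Y → om.toFun (cyl Sum.inr Y) = nu.toFun Y

/-- The global complete type `p` is in the support of `ν ∈ 𝔐_β(M)`: every set in `p`
has positive `ν`-measure. -/
def InSupport (L : FirstOrder.Language) {M : Type*} [L.Structure M] {β : Type*}
    (p : CompleteType L M (Set.univ : Set M) β)
    (nu : KeislerMeasure L M (Set.univ : Set M) β) : Prop :=
  ∀ Y ∈ p.sets, 0 < nu.toFun Y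

/-! ### Auxiliary material for the main theorem -/

section AmalAux

variable {L : FirstOrder.Language} {M : Type*} [L.Structure M]

namespace KeislerMeasure

variable {B : Set M} {γ : Type*}

lemma empty_eq (m : KeislerMeasure L M B γ) : m.toFun (∅ : Set (γ → M)) = 0 := by
  have h := m.compl' Set.univ Set.definable_univ
  rw [Set.compl_univ, m.measure_univ] at h
  linarith

lemma split (m : KeislerMeasure L M B γ) {s t : Set (γ → M)}
    (hs : B.Definable L s) (ht : B.Definable L t) :
    m.toFun t = m.toFun (s ∩ t) + m.toFun (sᶜ ∩ t) := by
  have h := m.union_inter' (s ∩ t) (sᶜ ∩ t) (hs.inter ht) (hs.compl.inter ht)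
  have h1 : (s ∩ t) ∪ (sᶜ ∩ t) = t := by ext x; by_cases hx : x ∈ s <;> simp [hx]
  have h2 : (s ∩ t) ∩ (sᶜ ∩ t) = (∅ : Set (γ → M)) := by
    ext x; by_cases hx : x ∈ s <;> simp [hx]
  rw [h1, h2, m.empty_eq] at h
  linarith

lemma mono (m : KeislerMeasure L M B γ) {s t : Set (γ → M)}
    (hs : B.Definable L s) (ht : B.Definable L t) (hst : s ⊆ t) :
    m.toFun s ≤ m.toFun t := by
  have h := m.split hs ht
  rw [Set.inter_eq_left.mpr hst] at h
  have h2 := m.nonneg' (sᶜ ∩ t) (hs.compl.inter ht)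
  linarith

lemma inter_one (m : KeislerMeasure L M B γ) {s t : Set (γ → M)}
    (hs : B.Definable L s) (ht : B.Definable L t) (h1 : m.toFun t = 1) :
    m.toFun (s ∩ t) = m.toFun s := by
  have h := m.split ht hs
  have hle : m.toFun (tᶜ ∩ s) ≤ m.toFun tᶜ :=
    m.mono (ht.compl.inter hs) ht.compl Set.inter_subset_left
  have hc := m.compl' t ht
  have hge := m.nonneg' (tᶜ ∩ s) (ht.compl.inter hs)
  rw [Set.inter_comm]
  linarith

lemma inter_zero (m : KeislerMeasure L M B γ) {s t : Set (γ → M)}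
    (hs : B.Definable L s) (ht : B.Definable L t) (h0 : m.toFun t = 0) :
    m.toFun (s ∩ t) = 0 := by
  have hle := m.mono (hs.inter ht) ht Set.inter_subset_right
  have hge := m.nonneg' (s ∩ t) (hs.inter ht)
  linarith

lemma union_null (m : KeislerMeasure L M B γ) {s t : Set (γ → M)}
    (hs : B.Definable L s) (ht : B.Definable L t)
    (h0 : m.toFun s = 0) (h0' : m.toFun t = 0) : m.toFun (s ∪ t) = 0 := by
  have h := m.union_inter' s t hs ht
  have h1 := m.nonneg' (s ∩ t) (hs.inter ht)
  have h2 := m.mono (hs.inter ht) hs Set.inter_subset_left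
  linarith

/-- The convex combination `r·m₁ + s·m₂` of two Keisler measures. -/
noncomputable def comb (r s : ℝ) (hr : 0 ≤ r) (hs : 0 ≤ s) (hrs : r + s = 1)
    (m₁ m₂ : KeislerMeasure L M B γ) : KeislerMeasure L M B γ where
  toFun S := r * m₁.toFun S + s * m₂.toFun S
  measure_univ := by rw [m₁.measure_univ, m₂.measure_univ]; linarith
  nonneg' S hS := by
    have h1 := m₁.nonneg' S hS
    have h2 := m₂.nonneg' S hS
    positivity
  compl' S hS := by
    rw [m₁.compl' S hS, m₂.compl' S hS]; linear_combination hrs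
  union_inter' S T hS hT := by
    rw [m₁.union_inter' S T hS hT, m₂.union_inter' S T hS hT]; ring

/-- Restriction of a global Keisler measure to a smaller parameter set. -/
noncomputable def restrict (m : KeislerMeasure L M (Set.univ : Set M) γ) (B : Set M) :
    KeislerMeasure L M B γ where
  toFun := m.toFun
  measure_univ := m.measure_univ
  nonneg' S hS := m.nonneg' S (hS.mono (Set.subset_univ _))
  compl' S hS := m.compl' S (hS.mono (Set.subset_univ _))
  union_inter' S T hS hT :=
    m.union_inter' S T (hS.mono (Set.subset_univ _)) (hT.mono (Set.subset_univ _))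

/-- Conditioning a global Keisler measure on a definable set of measure `r > 0`. -/
noncomputable def cond (m : KeislerMeasure L M (Set.univ : Set M) γ) (C : Set (γ → M))
    (hC : (Set.univ : Set M).Definable L C) (r : ℝ) (hr : 0 < r)
    (hrC : m.toFun C = r) : KeislerMeasure L M (Set.univ : Set M) γ where
  toFun S := m.toFun (S ∩ C) / r
  measure_univ := by rw [Set.univ_inter, hrC]; field_simp
  nonneg' S hS := div_nonneg (m.nonneg' _ (hS.inter hC)) hr.le
  compl' S hS := by
    have h := m.split (s := S) (t := C) hS hC
    rw [hrC] at h
    have h2 : m.toFun (Sᶜ ∩ C) = r - m.toFun (S ∩ C) := by linarith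
    rw [h2]
    field_simp
  union_inter' S T hS hT := by
    have h1 : (S ∪ T) ∩ C = (S ∩ C) ∪ (T ∩ C) := Set.union_inter_distrib_right _ _ _
    have h2 : (S ∩ C) ∩ (T ∩ C) = (S ∩ T) ∩ C := by
      ext x; simp only [Set.mem_inter_iff]; tauto
    rw [h1, m.union_inter' _ _ (hS.inter hC) (hT.inter hC), h2]
    ring

end KeislerMeasure

lemma cyl_definable {A : Set M} {α β : Type*} (f : α → β) {S : Set (α → M)}
    (h : A.Definable L S) : A.Definable L (cyl f S) :=
  h.preimage_comp f

lemma cyl_inter {α β : Type*} (f : α → β) (S T : Set (α → M)) :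
    cyl (M := M) f (S ∩ T) = cyl f S ∩ cyl f T := rfl

lemma cyl_compl {α β : Type*} (f : α → β) (S : Set (α → M)) :
    cyl (M := M) f Sᶜ = (cyl f S)ᶜ := rfl

lemma prodSet_inter_cylinr {α β : Type*} (X : Set (α → M)) (Y D : Set (β → M)) :
    prodSet X Y ∩ cyl Sum.inr D = prodSet X (Y ∩ D) := by
  rw [prodSet, prodSet, cyl_inter, Set.inter_assoc]

/-- If the supports of `ν₁` and `ν₂` are disjoint then some definable set has full
`ν₁`-measure and zero `ν₂`-measure. -/
lemma exists_separating_set {β : Type*}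
    (nu₁ nu₂ : KeislerMeasure L M (Set.univ : Set M) β)
    (hsupp : ¬ ∃ p : CompleteType L M (Set.univ : Set M) β,
      InSupport L p nu₁ ∧ InSupport L p nu₂) :
    ∃ D : Set (β → M), (Set.univ : Set M).Definable L D ∧
      nu₁.toFun D = 1 ∧ nu₂.toFun D = 0 := by
  by_contra hno
  push_neg at hno
  apply hsupp
  have hproper : ∀ Y₁ Y₂ : Set (β → M), (Set.univ : Set M).Definable L Y₁ →
      (Set.univ : Set M).Definable L Y₂ → nu₁.toFun Y₁ = 0 → nu₂.toFun Y₂ = 0 →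
      (Y₁ᶜ ∩ Y₂ᶜ).Nonempty := by
    intro Y₁ Y₂ d1 d2 h1 h2
    rw [Set.nonempty_iff_ne_empty]
    intro hne
    have hD1 : nu₁.toFun Y₁ᶜ = 1 := by rw [nu₁.compl' Y₁ d1, h1]; ring
    have hsub : Y₁ᶜ ⊆ Y₂ := by
      intro x hx
      by_contra hx2
      have : x ∈ Y₁ᶜ ∩ Y₂ᶜ := ⟨hx, hx2⟩
      rw [hne] at this
      exact this
    have hle := nu₂.mono d1.compl d2 hsub
    have hge := nu₂.nonneg' Y₁ᶜ d1.compl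
    exact hno Y₁ᶜ d1.compl hD1 (by linarith)
  classical
  set Base : Set (Set (β → M)) := {t | (Set.univ : Set M).Definable L t ∧
    ∃ Y₁ Y₂ : Set (β → M), (Set.univ : Set M).Definable L Y₁ ∧
      (Set.univ : Set M).Definable L Y₂ ∧
      nu₁.toFun Y₁ = 0 ∧ nu₂.toFun Y₂ = 0 ∧ Y₁ᶜ ∩ Y₂ᶜ ⊆ t} with hBase
  set S : Set (Set (Set (β → M))) := {F | Base ⊆ F ∧ (∀ t ∈ F, (Set.univ : Set M).Definable L t)
    ∧ ∅ ∉ F ∧ (∀ s ∈ F, ∀ t ∈ F, s ∩ t ∈ F) ∧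
    (∀ s ∈ F, ∀ t : Set (β → M), (Set.univ : Set M).Definable L t → s ⊆ t → t ∈ F)} with hS
  have hBaseS : Base ∈ S := by
    refine ⟨le_refl _, fun t ht => ht.1, ?_, ?_, ?_⟩
    · rintro ⟨-, Y₁, Y₂, d1, d2, h1, h2, hsub⟩
      obtain ⟨x, hx⟩ := hproper Y₁ Y₂ d1 d2 h1 h2
      exact hsub hx
    · rintro s ⟨ds, Y₁, Y₂, d1, d2, h1, h2, hsub⟩ t ⟨dt, Z₁, Z₂, e1, e2, g1, g2, gsub⟩
      refine ⟨ds.inter dt, Y₁ ∪ Z₁, Y₂ ∪ Z₂, d1.union e1, d2.union e2,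
        nu₁.union_null d1 e1 h1 g1, nu₂.union_null d2 e2 h2 g2, ?_⟩
      intro x hx
      simp only [Set.mem_inter_iff, Set.mem_compl_iff, Set.mem_union, not_or] at hx
      exact ⟨hsub ⟨hx.1.1, hx.2.1⟩, gsub ⟨hx.1.2, hx.2.2⟩⟩
    · rintro s ⟨-, Y₁, Y₂, d1, d2, h1, h2, hsub⟩ t dt hst
      exact ⟨dt, Y₁, Y₂, d1, d2, h1, h2, hsub.trans hst⟩
  obtain ⟨F, hBaseF, hFmax⟩ := zorn_subset_nonempty S (by
    intro c hcS hchain hcne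
    obtain ⟨F₀, hF₀⟩ := hcne
    refine ⟨⋃₀ c, ⟨(hcS hF₀).1.trans (Set.subset_sUnion_of_mem hF₀), ?_, ?_, ?_, ?_⟩,
      fun s hs => Set.subset_sUnion_of_mem hs⟩
    · rintro t ⟨F, hF, htF⟩
      exact (hcS hF).2.1 t htF
    · rintro ⟨F, hF, hem⟩
      exact (hcS hF).2.2.1 hem
    · rintro s ⟨F₁, hF₁, hs⟩ t ⟨F₂, hF₂, ht⟩
      rcases hchain.total hF₁ hF₂ with h | h
      · exact Set.subset_sUnion_of_mem hF₂ ((hcS hF₂).2.2.2.1 s (h hs) t ht)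
      · exact Set.subset_sUnion_of_mem hF₁ ((hcS hF₁).2.2.2.1 s hs t (h ht))
    · rintro s ⟨F₁, hF₁, hs⟩ t dt hst
      exact Set.subset_sUnion_of_mem hF₁ ((hcS hF₁).2.2.2.2 s hs t dt hst)) Base hBaseS
  obtain ⟨-, hFdef, hFne, hFinter, hFsup⟩ := hFmax.1
  have huniv : (Set.univ : Set (β → M)) ∈ F := hBaseF ⟨Set.definable_univ, ∅, ∅,
    Set.definable_empty, Set.definable_empty, nu₁.empty_eq, nu₂.empty_eq, Set.subset_univ _⟩
  refine ⟨⟨F, hFdef, huniv, hFne, hFinter, hFsup, ?_⟩, ?_, ?_⟩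
  · intro s ds
    by_cases hs : s ∈ F
    · exact Or.inl hs
    by_cases hdis : ∃ u ∈ F, u ∩ s = ∅
    · obtain ⟨u, huF, hu⟩ := hdis
      refine Or.inr (hFsup u huF sᶜ ds.compl ?_)
      intro x hxu hxs
      have : x ∈ u ∩ s := ⟨hxu, hxs⟩
      rw [hu] at this
      exact this
    · push_neg at hdis
      exfalso
      set F' : Set (Set (β → M)) := {t | (Set.univ : Set M).Definable L t ∧
        ∃ u ∈ F, u ∩ s ⊆ t} with hF'
      have hFF' : F ⊆ F' := fun t ht => ⟨hFdef t ht, t, ht, Set.inter_subset_left⟩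
      have hF'S : F' ∈ S := by
        refine ⟨(hBaseF.trans hFF' : Base ⊆ F'), fun t ht => ht.1, ?_, ?_, ?_⟩
        · rintro ⟨-, u, huF, hsub⟩
          exact (hdis u huF).ne_empty (Set.subset_empty_iff.mp hsub)
        · rintro a ⟨da, u₁, hu₁, hs1⟩ b ⟨db, u₂, hu₂, hs2⟩
          refine ⟨da.inter db, u₁ ∩ u₂, hFinter u₁ hu₁ u₂ hu₂, ?_⟩
          intro x hx
          exact ⟨hs1 ⟨hx.1.1, hx.2⟩, hs2 ⟨hx.1.2, hx.2⟩⟩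
        · rintro a ⟨da, u, huF, hsub⟩ t dt hat
          exact ⟨dt, u, huF, hsub.trans hat⟩
      have : F' ⊆ F := hFmax.2 hF'S hFF'
      exact hs (this ⟨ds, Set.univ, huniv, fun x hx => hx.2⟩)
  · intro Y hY
    refine lt_of_le_of_ne (nu₁.nonneg' Y (hFdef Y hY)) (fun h => ?_)
    have hYc : Yᶜ ∈ F := hBaseF ⟨(hFdef Y hY).compl, Y, ∅, hFdef Y hY,
      Set.definable_empty, h.symm, nu₂.empty_eq, fun x hx => hx.1⟩
    have := hFinter Y hY Yᶜ hYc
    rw [Set.inter_compl_self] at this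
    exact hFne this
  · intro Y hY
    refine lt_of_le_of_ne (nu₂.nonneg' Y (hFdef Y hY)) (fun h => ?_)
    have hYc : Yᶜ ∈ F := hBaseF ⟨(hFdef Y hY).compl, ∅, Y, Set.definable_empty,
      hFdef Y hY, nu₁.empty_eq, h.symm, fun x hx => hx.2⟩
    have := hFinter Y hY Yᶜ hYc
    rw [Set.inter_compl_self] at this
    exact hFne this

/-- Transfer lemma: conditioning an element of `Amal(λ₃, μ)` on a cylinder of known
measure `r > 0` produces an element of `Amal(λ, μ)`, which pins down its conditional
`β`-marginal. -/
lemma amal_transfer (A : Set M) {α β : Type*}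
    (mu : KeislerMeasure L M (Set.univ : Set M) α)
    (nu : KeislerMeasure L M (Set.univ : Set M) β)
    (lam : KeislerMeasure L M A (α ⊕ β))
    (huniq : ∀ om ∈ amalSpace L A lam mu, ∀ Y : Set (β → M),
      (Set.univ : Set M).Definable L Y → om.toFun (cyl Sum.inr Y) = nu.toFun Y)
    (om : KeislerMeasure L M (Set.univ : Set M) (α ⊕ β))
    (hmg : ∀ X : Set (α → M), (Set.univ : Set M).Definable L X →
      om.toFun (cyl Sum.inl X) = mu.toFun X)
    (hsep : SepAmalgam L (Set.univ : Set M) om)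
    (D : Set (β → M)) (hD : (Set.univ : Set M).Definable L D)
    (r : ℝ) (hr : 0 < r) (hrD : om.toFun (cyl Sum.inr D) = r)
    (hkey : ∀ S : Set (α ⊕ β → M), A.Definable L S →
      om.toFun (S ∩ cyl Sum.inr D) = r * lam.toFun S)
    (Y : Set (β → M)) (hY : (Set.univ : Set M).Definable L Y) :
    om.toFun (cyl Sum.inr Y ∩ cyl Sum.inr D) = r * nu.toFun Y := by
  have hcD : (Set.univ : Set M).Definable L (cyl Sum.inr D : Set (α ⊕ β → M)) :=
    cyl_definable _ hD
  have hmem : om.cond (cyl Sum.inr D) hcD r hr hrD ∈ amalSpace L A lam mu := by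
    refine ⟨⟨?_, ?_⟩, ?_⟩
    · intro S hS
      show om.toFun (S ∩ cyl Sum.inr D) / r = lam.toFun S
      rw [hkey S hS]
      field_simp
    · intro X hX
      show om.toFun (cyl Sum.inl X ∩ cyl Sum.inr D) / r = mu.toFun X
      have h1 : cyl Sum.inl X ∩ cyl Sum.inr D = prodSet X D := rfl
      rw [h1, hsep X D hX hD, hmg X hX, hrD]
      field_simp
    · intro X Z hX hZ
      show om.toFun (prodSet X Z ∩ cyl Sum.inr D) / r =
        om.toFun (cyl Sum.inl X ∩ cyl Sum.inr D) / r *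
          (om.toFun (cyl Sum.inr Z ∩ cyl Sum.inr D) / r)
      have h1 : cyl Sum.inl X ∩ cyl Sum.inr D = prodSet X D := rfl
      rw [prodSet_inter_cylinr, hsep X (Z ∩ D) hX (hZ.inter hD), h1, hsep X D hX hD, hrD,
        hmg X hX, ← cyl_inter]
      field_simp
      try ring
  have h : om.toFun (cyl Sum.inr Y ∩ cyl Sum.inr D) / r = nu.toFun Y :=
    huniq _ hmem Y hY
  rw [← h]
  field_simp

end AmalAux


/-- If `μ ▶_A ν₁`, `μ ▶_A ν₂` and `supp(ν₁) ∩ supp(ν₂) = ∅`, then there is a finite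
tuple `b` from `M` such that `μ ▶_{A∪b} (rν₁ + sν₂)` for all `r, s ∈ [0,1]` with
`r + s = 1`. -/
theorem amalDecipher_convex_combination {L : FirstOrder.Language} {M : Type*}
    [L.Structure M] (A : Set M) {α β : Type*}
    (mu : KeislerMeasure L M (Set.univ : Set M) α)
    (nu₁ nu₂ : KeislerMeasure L M (Set.univ : Set M) β)
    (hsupp : ¬ ∃ p : CompleteType L M (Set.univ : Set M) β,
      InSupport L p nu₁ ∧ InSupport L p nu₂)
    (h₁ : AmalDecipherOver L A mu nu₁) (h₂ : AmalDecipherOver L A mu nu₂) :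
    ∃ (n : ℕ) (b : Fin n → M), ∀ r s : ℝ, 0 ≤ r → 0 ≤ s → r + s = 1 →
      ∀ nu₃ : KeislerMeasure L M (Set.univ : Set M) β,
        (∀ Y : Set (β → M), (Set.univ : Set M).Definable L Y →
          nu₃.toFun Y = r * nu₁.toFun Y + s * nu₂.toFun Y) →
        AmalDecipherOver L (A ∪ Set.range b) mu nu₃ := by
  obtain ⟨D, hD, hD1, hD2⟩ := exists_separating_set nu₁ nu₂ hsupp
  obtain ⟨A0, -, hA0⟩ := Set.definable_iff_finitely_definable.mp hD
  classical
  set b : Fin A0.card → M := fun i => ((A0.equivFin.symm i : A0) : M) with hbdef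
  have hrange : Set.range b = (A0 : Set M) := by
    ext x
    constructor
    · rintro ⟨i, rfl⟩
      simp only [hbdef]
      exact Finset.mem_coe.mpr (A0.equivFin.symm i).2
    · intro hx
      exact ⟨A0.equivFin ⟨x, Finset.mem_coe.mp hx⟩, by simp [hbdef]⟩
  have hDb : (A ∪ Set.range b).Definable L D := by
    refine Set.Definable.mono ?_ Set.subset_union_right
    rw [hrange]
    exact hA0
  have hD1c : nu₁.toFun Dᶜ = 0 := by rw [nu₁.compl' D hD, hD1]; ring
  have hD2c : nu₂.toFun Dᶜ = 1 := by rw [nu₂.compl' D hD, hD2]; ring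
  obtain ⟨lam₁, hpi₁, ⟨om₁, hom₁⟩, huniq₁⟩ := h₁
  obtain ⟨lam₂, hpi₂, ⟨om₂, hom₂⟩, huniq₂⟩ := h₂
  have hproj₁ : ∀ Y : Set (β → M), (Set.univ : Set M).Definable L Y →
      om₁.toFun (cyl Sum.inr Y) = nu₁.toFun Y := huniq₁ om₁ hom₁
  have hproj₂ : ∀ Y : Set (β → M), (Set.univ : Set M).Definable L Y →
      om₂.toFun (cyl Sum.inr Y) = nu₂.toFun Y := huniq₂ om₂ hom₂
  obtain ⟨⟨hag₁, hmg₁⟩, hsp₁⟩ := hom₁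
  obtain ⟨⟨hag₂, hmg₂⟩, hsp₂⟩ := hom₂
  refine ⟨A0.card, b, ?_⟩
  intro r s hr hs hrs nu₃ hnu₃
  have homD1 : om₁.toFun (cyl Sum.inr D) = 1 := by rw [hproj₁ D hD, hD1]
  have homD2 : om₂.toFun (cyl Sum.inr D) = 0 := by rw [hproj₂ D hD, hD2]
  have homDc1 : om₁.toFun (cyl Sum.inr Dᶜ) = 0 := by rw [hproj₁ Dᶜ hD.compl, hD1c]
  have homDc2 : om₂.toFun (cyl Sum.inr Dᶜ) = 1 := by rw [hproj₂ Dᶜ hD.compl, hD2c]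
  have hcD : (Set.univ : Set M).Definable L (cyl Sum.inr D : Set (α ⊕ β → M)) :=
    cyl_definable _ hD
  have hcDb : (A ∪ Set.range b).Definable L (cyl Sum.inr D : Set (α ⊕ β → M)) :=
    cyl_definable _ hDb
  have hcDc : (Set.univ : Set M).Definable L (cyl Sum.inr Dᶜ : Set (α ⊕ β → M)) :=
    cyl_definable _ hD.compl
  have hcDcb : (A ∪ Set.range b).Definable L (cyl Sum.inr Dᶜ : Set (α ⊕ β → M)) :=
    cyl_definable _ hDb.compl
  refine ⟨(KeislerMeasure.comb r s hr hs hrs om₁ om₂).restrict (A ∪ Set.range b), ?_,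
    ⟨KeislerMeasure.comb r s hr hs hrs om₁ om₂, ⟨fun S _ => rfl, ?_⟩, ?_⟩, ?_⟩
  · -- λ₃ has α-marginal μ
    intro X hX
    have hXu := hX.mono (Set.subset_univ _)
    show r * om₁.toFun (cyl Sum.inl X) + s * om₂.toFun (cyl Sum.inl X) = mu.toFun X
    rw [hmg₁ X hXu, hmg₂ X hXu]
    linear_combination mu.toFun X * hrs
  · -- ω₃ has α-marginal μ
    intro X hX
    show r * om₁.toFun (cyl Sum.inl X) + s * om₂.toFun (cyl Sum.inl X) = mu.toFun X
    rw [hmg₁ X hX, hmg₂ X hX]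
    linear_combination mu.toFun X * hrs
  · -- ω₃ is a separated amalgam
    intro X Y hX hY
    show r * om₁.toFun (prodSet X Y) + s * om₂.toFun (prodSet X Y) =
      (r * om₁.toFun (cyl Sum.inl X) + s * om₂.toFun (cyl Sum.inl X)) *
        (r * om₁.toFun (cyl Sum.inr Y) + s * om₂.toFun (cyl Sum.inr Y))
    rw [hsp₁ X Y hX hY, hsp₂ X Y hX hY, hmg₁ X hX, hmg₂ X hX, hproj₁ Y hY, hproj₂ Y hY]
    linear_combination (-(mu.toFun X * (r * nu₁.toFun Y + s * nu₂.toFun Y))) * hrs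
  · -- every ω ∈ Amal(λ₃, μ) has β-marginal ν₃
    intro om hom Y hY
    obtain ⟨⟨hag, hmg⟩, hsp⟩ := hom
    have hcY : (Set.univ : Set M).Definable L (cyl Sum.inr Y : Set (α ⊕ β → M)) :=
      cyl_definable _ hY
    have hagD : om.toFun (cyl Sum.inr D) = r := by
      rw [hag (cyl Sum.inr D) hcDb]
      show r * om₁.toFun (cyl Sum.inr D) + s * om₂.toFun (cyl Sum.inr D) = r
      rw [homD1, homD2]
      ring
    have hagDc : om.toFun (cyl Sum.inr Dᶜ) = s := by
      rw [hag (cyl Sum.inr Dᶜ) hcDcb]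
      show r * om₁.toFun (cyl Sum.inr Dᶜ) + s * om₂.toFun (cyl Sum.inr Dᶜ) = s
      rw [homDc1, homDc2]
      ring
    have hkey₁ : ∀ S : Set (α ⊕ β → M), A.Definable L S →
        om.toFun (S ∩ cyl Sum.inr D) = r * lam₁.toFun S := by
      intro S hS
      have hSu := hS.mono (Set.subset_univ _)
      rw [hag (S ∩ cyl Sum.inr D) ((hS.mono Set.subset_union_left).inter hcDb)]
      show r * om₁.toFun (S ∩ cyl Sum.inr D) + s * om₂.toFun (S ∩ cyl Sum.inr D) =
        r * lam₁.toFun S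
      rw [om₁.inter_one hSu hcD homD1, om₂.inter_zero hSu hcD homD2, hag₁ S hS]
      ring
    have hkey₂ : ∀ S : Set (α ⊕ β → M), A.Definable L S →
        om.toFun (S ∩ cyl Sum.inr Dᶜ) = s * lam₂.toFun S := by
      intro S hS
      have hSu := hS.mono (Set.subset_univ _)
      rw [hag (S ∩ cyl Sum.inr Dᶜ) ((hS.mono Set.subset_union_left).inter hcDcb)]
      show r * om₁.toFun (S ∩ cyl Sum.inr Dᶜ) + s * om₂.toFun (S ∩ cyl Sum.inr Dᶜ) =
        s * lam₂.toFun S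
      rw [om₁.inter_zero hSu hcDc homDc1, om₂.inter_one hSu hcDc homDc2, hag₂ S hS]
      ring
    have t1 : om.toFun (cyl Sum.inr Y ∩ cyl Sum.inr D) = r * nu₁.toFun Y := by
      rcases lt_or_eq_of_le hr with hr0 | hr0
      · exact amal_transfer A mu nu₁ lam₁ huniq₁ om hmg hsp D hD r hr0 hagD hkey₁ Y hY
      · have hle := om.mono (hcY.inter hcD) hcD Set.inter_subset_right
        have hge := om.nonneg' _ (hcY.inter hcD)
        rw [hagD, ← hr0] at hle
        rw [← hr0]
        linarith
    have t2 : om.toFun (cyl Sum.inr Y ∩ cyl Sum.inr Dᶜ) = s * nu₂.toFun Y := by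
      rcases lt_or_eq_of_le hs with hs0 | hs0
      · exact amal_transfer A mu nu₂ lam₂ huniq₂ om hmg hsp Dᶜ hD.compl s hs0 hagDc hkey₂ Y hY
      · have hle := om.mono (hcY.inter hcDc) hcDc Set.inter_subset_right
        have hge := om.nonneg' _ (hcY.inter hcDc)
        rw [hagDc, ← hs0] at hle
        rw [← hs0]
        linarith
    have hsplit : om.toFun (cyl Sum.inr Y) =
        om.toFun (cyl Sum.inr Y ∩ cyl Sum.inr D) +
          om.toFun (cyl Sum.inr Y ∩ cyl Sum.inr Dᶜ) := by
      have h := om.split (s := cyl Sum.inr D) (t := cyl Sum.inr Y) hcD hcY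
      rw [Set.inter_comm (cyl Sum.inr D) (cyl Sum.inr Y),
        Set.inter_comm ((cyl Sum.inr D)ᶜ) (cyl Sum.inr Y), ← cyl_compl] at h
      exact h
    rw [hsplit, t1, t2, hnu₃ Y hY]
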